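/- Let Γ be a finite group acting on the finite set [n] = {1,...,n}, and let F([n]) denote the set of flags I_• = (I_ℓ ⊊ ... ⊊ I_1 ⊊ I_0 = [n]) of subsets of [n] (of arbitrary length ℓ ≥ 0). Define on the polynomial ring ℤ[q]: for the decomposition of [n] into Γ-orbits with λ_i orbits of size i, set Q_λ(q) = Π_i (q^i − 1)^{λ_i}. Then Σ over Γ-fixed flags I_• in F([n]) of (−1)^{ℓ(I_•)} q^{|I_max|} equals Q_λ(q), where I_max is the smallest (last) subset of the flag and ℓ(I_•) its length. -/

import Mathlib

open Classical

section Comb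

open Finset

variable {Y : Type*} [Fintype Y]

set_option linter.unusedSectionVars false

/-- `filter` with a pinned (classical) decidability instance. -/
noncomputable def filterP (P : Finset Y → Prop) : Finset (Finset Y) :=
  Finset.univ.filter P

lemma mem_filterP {P : Finset Y → Prop} {M : Finset Y} : M ∈ filterP P ↔ P M := by
  simp [filterP]

/-- Chains of subsets of `Y` all of whose members satisfy `P`. -/
noncomputable def chainsP (P : Finset Y → Prop) : Finset (Finset (Finset Y)) :=
  Finset.univ.filter fun D => IsChain (· ⊆ ·) (D : Set (Finset Y)) ∧ ∀ T ∈ D, P T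

lemma mem_chainsP {P : Finset Y → Prop} {D : Finset (Finset Y)} :
    D ∈ chainsP P ↔ IsChain (· ⊆ ·) (D : Set (Finset Y)) ∧ ∀ T ∈ D, P T := by
  simp [chainsP]

lemma chainsP_congr {P Q : Finset Y → Prop} (h : ∀ T, P T ↔ Q T) : chainsP P = chainsP Q := by
  ext D; simp [mem_chainsP, h]

lemma empty_mem_chainsP (P : Finset Y → Prop) : ∅ ∈ chainsP P := by
  rw [mem_chainsP]
  refine ⟨by simp [IsChain, Set.Pairwise], fun T hT => absurd hT (by simp)⟩

/-- The minimum of a nonempty chain. -/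
noncomputable def minE (D : Finset (Finset Y)) : Finset Y :=
  if h : D.Nonempty then D.inf' h id else ∅

lemma minE_subset {D : Finset (Finset Y)} (h : D.Nonempty) {T : Finset Y} (hT : T ∈ D) :
    minE D ⊆ T := by
  rw [minE, dif_pos h]; exact Finset.inf'_le id hT

lemma minE_mem {D : Finset (Finset Y)} (h : D.Nonempty)
    (hc : IsChain (· ⊆ ·) (D : Set (Finset Y))) : minE D ∈ D := by
  obtain ⟨T, hT, hmin⟩ := D.exists_min_image Finset.card h
  have hTle : ∀ T' ∈ D, T ⊆ T' := by
    intro T' hT'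
    rcases eq_or_ne T T' with rfl | hne
    · exact subset_rfl
    · rcases hc hT hT' hne with h' | h'
      · exact h'
      · rw [eq_of_subset_of_card_le h' (hmin T' hT')]
  have hE : minE D = T := by
    rw [minE, dif_pos h]
    exact le_antisymm (Finset.inf'_le id hT) (Finset.le_inf' h id hTle)
  rw [hE]; exact hT

lemma sum_chainsP_decomp {M₀ : Type*} [AddCommMonoid M₀] (P : Finset Y → Prop)
    (f : Finset (Finset Y) → M₀) :
    ∑ D ∈ chainsP P, f D =
      f ∅ + ∑ M ∈ filterP P,
        ∑ D ∈ chainsP (fun T => P T ∧ M ⊂ T), f (insert M D) := by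
  rw [← Finset.add_sum_erase _ f (empty_mem_chainsP P)]
  congr 1
  rw [Finset.sum_sigma']
  refine Finset.sum_bij' (i := fun D _ => (⟨minE D, D.erase (minE D)⟩ :
      (_ : Finset Y) × Finset (Finset Y)))
    (j := fun p _ => insert p.1 p.2) ?_ ?_ ?_ ?_ ?_
  · -- hi : maps into sigma set
    intro D hD
    rw [Finset.mem_erase] at hD
    obtain ⟨hne, hD⟩ := hD
    rw [mem_chainsP] at hD
    have hne' : D.Nonempty := Finset.nonempty_iff_ne_empty.2 hne
    have hmem := minE_mem hne' hD.1
    rw [Finset.mem_sigma]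
    constructor
    · exact mem_filterP.2 (hD.2 _ hmem)
    · rw [mem_chainsP]
      refine ⟨hD.1.mono ?_, ?_⟩
      · intro T hT
        simp only [Finset.coe_erase, Set.mem_diff] at hT
        exact hT.1
      · intro T hT
        rw [Finset.mem_erase] at hT
        refine ⟨hD.2 _ hT.2, ?_⟩
        exact HasSubset.Subset.ssubset_of_ne (minE_subset hne' hT.2) (Ne.symm hT.1)
  · -- hj : maps back
    rintro ⟨M, D⟩ hp
    rw [Finset.mem_sigma] at hp
    obtain ⟨hM, hD⟩ := hp
    rw [mem_filterP] at hM
    rw [mem_chainsP] at hD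
    rw [Finset.mem_erase]
    constructor
    · exact (Finset.insert_nonempty _ _).ne_empty
    · rw [mem_chainsP]
      constructor
      · rw [Finset.coe_insert]
        exact hD.1.insert (fun T hT _ => Or.inl (hD.2 T hT).2.subset)
      · intro T hT
        rcases Finset.mem_insert.1 hT with rfl | hT
        · exact hM
        · exact (hD.2 T hT).1
  · -- left inverse
    intro D hD
    rw [Finset.mem_erase] at hD
    obtain ⟨hne, hD⟩ := hD
    rw [mem_chainsP] at hD
    exact Finset.insert_erase (minE_mem (Finset.nonempty_iff_ne_empty.2 hne) hD.1)
  · -- right inverse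
    rintro ⟨M, D⟩ hp
    rw [Finset.mem_sigma] at hp
    obtain ⟨hM, hD⟩ := hp
    rw [mem_chainsP] at hD
    have hMD : M ∉ D := fun h => (hD.2 M h).2.ne rfl
    have hne : (insert M D).Nonempty := Finset.insert_nonempty _ _
    have hmin : minE (insert M D) = M := by
      have hch : IsChain (· ⊆ ·) ((insert M D : Finset (Finset Y)) : Set (Finset Y)) := by
        rw [Finset.coe_insert]
        exact hD.1.insert (fun T hT _ => Or.inl (hD.2 T hT).2.subset)
      have hmem := minE_mem hne hch
      rcases Finset.mem_insert.1 hmem with h | h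
      · exact h
      · exact absurd ((hD.2 _ h).2.trans_subset (minE_subset hne (Finset.mem_insert_self M D)))
          (ssubset_irrefl _)
    dsimp only
    rw [hmin, Finset.erase_insert hMD]
  · -- value equality
    intro D hD
    rw [Finset.mem_erase] at hD
    obtain ⟨hne, hD⟩ := hD
    rw [mem_chainsP] at hD
    rw [Finset.insert_erase (minE_mem (Finset.nonempty_iff_ne_empty.2 hne) hD.1)]

lemma sum_powerset_neg_one {R : Type*} [CommRing R] {F : Finset Y} (hF : F.Nonempty) :
    ∑ S ∈ F.powerset, (-1 : R) ^ S.card = 0 := by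
  have h := Finset.prod_add (fun _ : Y => (-1 : R)) (fun _ => 1) F
  have h0 : ∏ i ∈ F, ((-1 : R) + 1) = 0 := by
    simp [Finset.prod_const, zero_pow hF.card_ne_zero]
  rw [h0] at h
  simpa [Finset.prod_const] using h.symm

lemma sum_chainsP_sign {R : Type*} [CommRing R] (M : Finset Y) (hM : M ⊂ Finset.univ) :
    ∑ D ∈ chainsP (fun T => M ⊂ T ∧ T ⊂ Finset.univ), (-1 : R) ^ D.card
      = (-1) ^ ((Finset.univ \ M).card + 1) := by
  generalize hn : (Finset.univ \ M).card = n
  induction n using Nat.strong_induction_on generalizing M with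
  | _ n ih =>
  rw [sum_chainsP_decomp (fun T => M ⊂ T ∧ T ⊂ Finset.univ) (fun D => (-1 : R) ^ D.card)]
  have hstep : ∀ M' ∈ filterP (fun T => M ⊂ T ∧ T ⊂ (Finset.univ : Finset Y)),
      ∑ D ∈ chainsP (fun T => (M ⊂ T ∧ T ⊂ Finset.univ) ∧ M' ⊂ T),
        (-1 : R) ^ (insert M' D).card = (-1) ^ ((Finset.univ \ M').card) := by
    intro M' hM'
    rw [mem_filterP] at hM'
    have hcongr : chainsP (fun T => (M ⊂ T ∧ T ⊂ Finset.univ) ∧ M' ⊂ T)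
        = chainsP (fun T : Finset Y => M' ⊂ T ∧ T ⊂ Finset.univ) := by
      apply chainsP_congr
      intro T
      constructor
      · rintro ⟨⟨_, h2⟩, h3⟩; exact ⟨h3, h2⟩
      · rintro ⟨h1, h2⟩; exact ⟨⟨hM'.1.trans h1, h2⟩, h1⟩
    rw [hcongr]
    have hcard : ∀ D ∈ chainsP (fun T : Finset Y => M' ⊂ T ∧ T ⊂ Finset.univ),
        (-1 : R) ^ (insert M' D).card = -(-1 : R) ^ D.card := by
      intro D hD
      rw [mem_chainsP] at hD
      have : M' ∉ D := fun h => (hD.2 M' h).1.ne rfl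
      rw [Finset.card_insert_of_notMem this, pow_succ]
      ring
    rw [Finset.sum_congr rfl hcard, Finset.sum_neg_distrib]
    have hlt : (Finset.univ \ M').card < n := by
      rw [← hn]
      have h1 : (Finset.univ \ M').card = Fintype.card Y - M'.card :=
        Finset.card_sdiff_of_subset (Finset.subset_univ _)
      have h2 : (Finset.univ \ M).card = Fintype.card Y - M.card :=
        Finset.card_sdiff_of_subset (Finset.subset_univ _)
      have h3 : M.card < M'.card := Finset.card_lt_card hM'.1
      have h4 : M'.card ≤ Fintype.card Y := by
        simpa using Finset.card_le_card (Finset.subset_univ M')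
      omega
    rw [ih _ hlt M' hM'.2 rfl, pow_succ]
    ring
  rw [Finset.sum_congr rfl hstep]
  -- reindex by complement
  set F : Finset Y := Finset.univ \ M with hF
  have hFne : F.Nonempty := by
    rw [hF, Finset.sdiff_nonempty]
    exact fun h => hM.ne (le_antisymm hM.subset h)
  have hreindex : ∑ M' ∈ filterP (fun T => M ⊂ T ∧ T ⊂ (Finset.univ : Finset Y)),
      (-1 : R) ^ ((Finset.univ \ M').card)
      = ∑ S ∈ (F.powerset.erase ∅).erase F, (-1 : R) ^ S.card := by
    refine Finset.sum_nbij' (i := fun M' => Finset.univ \ M') (j := fun S => Finset.univ \ S)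
      ?_ ?_ ?_ ?_ ?_
    · intro M' hM'
      rw [mem_filterP] at hM'
      rw [Finset.mem_erase, Finset.mem_erase, Finset.mem_powerset]
      refine ⟨?_, ?_, ?_⟩
      · intro h
        have heq : M' = M := by
          have h1 : Finset.univ \ (Finset.univ \ M') = Finset.univ \ (Finset.univ \ M) := by
            rw [h]
          rwa [Finset.sdiff_sdiff_self_left, Finset.sdiff_sdiff_self_left,
            Finset.univ_inter, Finset.univ_inter] at h1
        exact hM'.1.ne' heq
      · rw [Ne, Finset.sdiff_eq_empty_iff_subset]
        intro h
        exact hM'.2.ne (le_antisymm hM'.2.subset h)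
      · exact Finset.sdiff_subset_sdiff subset_rfl hM'.1.subset
    · intro S hS
      rw [Finset.mem_erase, Finset.mem_erase, Finset.mem_powerset] at hS
      obtain ⟨hSF, hSne, hSsub⟩ := hS
      rw [mem_filterP]
      constructor
      · rw [Finset.ssubset_iff_subset_ne]
        constructor
        · intro x hx
          rw [Finset.mem_sdiff]
          refine ⟨Finset.mem_univ _, fun hxS => ?_⟩
          have hh := hSsub hxS
          rw [hF, Finset.mem_sdiff] at hh
          exact hh.2 hx
        · intro h
          apply hSF
          have h1 : Finset.univ \ M = Finset.univ \ (Finset.univ \ S) := by rw [← h]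
          rw [Finset.sdiff_sdiff_self_left, Finset.univ_inter] at h1
          rw [hF]
          exact h1.symm
      · rw [Finset.ssubset_iff_subset_ne]
        refine ⟨Finset.subset_univ _, fun h => ?_⟩
        obtain ⟨x, hx⟩ := Finset.nonempty_iff_ne_empty.2 hSne
        have hh : x ∈ Finset.univ \ S := h.symm ▸ Finset.mem_univ x
        rw [Finset.mem_sdiff] at hh
        exact hh.2 hx
    · intro M' _
      rw [Finset.sdiff_sdiff_self_left, Finset.univ_inter]
    · intro S _
      rw [Finset.sdiff_sdiff_self_left, Finset.univ_inter]
    · intro M' _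
      rfl
  rw [hreindex]
  have hFmem : F ∈ F.powerset.erase ∅ := by
    rw [Finset.mem_erase, Finset.mem_powerset]
    exact ⟨Finset.nonempty_iff_ne_empty.1 hFne, subset_rfl⟩
  have h1 : ∑ S ∈ F.powerset.erase ∅, (-1 : R) ^ S.card
      = ∑ S ∈ (F.powerset.erase ∅).erase F, (-1 : R) ^ S.card + (-1) ^ F.card := by
    rw [Finset.sum_erase_add _ _ hFmem]
  have h2 : ∑ S ∈ F.powerset, (-1 : R) ^ S.card
      = ∑ S ∈ F.powerset.erase ∅, (-1 : R) ^ S.card + 1 := by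
    rw [← Finset.sum_erase_add _ _ (Finset.empty_mem_powerset F)]
    simp
  have h3 := sum_powerset_neg_one (R := R) hFne
  rw [h2, h1] at h3
  have hcard : F.card = n := by rw [← hn, hF]
  rw [hcard] at h3
  have h4 : ∑ S ∈ (F.powerset.erase ∅).erase F, (-1 : R) ^ S.card = -(-1) ^ n - 1 := by
    linear_combination h3
  rw [h4, pow_succ]
  simp only [Finset.card_empty, pow_zero]
  ring

lemma key_sum {R : Type*} [CommRing R] (w : Y → ℕ) (q : R) :
    ∑ C ∈ chainsP (fun T : Finset Y => T ⊂ Finset.univ),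
      (-1 : R) ^ C.card * q ^ (∑ y ∈ (insert Finset.univ C).inf id, w y)
    = ∏ y, (q ^ w y - 1) := by
  rw [sum_chainsP_decomp (fun T : Finset Y => T ⊂ Finset.univ)
    (fun C => (-1 : R) ^ C.card * q ^ (∑ y ∈ (insert Finset.univ C).inf id, w y))]
  have hstep : ∀ M ∈ filterP (fun T : Finset Y => T ⊂ Finset.univ),
      ∑ D ∈ chainsP (fun T => T ⊂ Finset.univ ∧ M ⊂ T),
        (-1 : R) ^ (insert M D).card *
          q ^ (∑ y ∈ (insert Finset.univ (insert M D)).inf id, w y)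
      = (-1) ^ ((Finset.univ \ M).card) * q ^ (∑ y ∈ M, w y) := by
    intro M hM
    rw [mem_filterP] at hM
    have hterm : ∀ D ∈ chainsP (fun T : Finset Y => T ⊂ Finset.univ ∧ M ⊂ T),
        (-1 : R) ^ (insert M D).card *
          q ^ (∑ y ∈ (insert Finset.univ (insert M D)).inf id, w y)
        = -((-1 : R) ^ D.card * q ^ (∑ y ∈ M, w y)) := by
      intro D hD
      rw [mem_chainsP] at hD
      have hMD : M ∉ D := fun h => (hD.2 M h).2.ne rfl
      have hinf : (insert Finset.univ (insert M D)).inf id = M := by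
        apply le_antisymm
        · exact Finset.inf_le (Finset.mem_insert_of_mem (Finset.mem_insert_self M D))
        · apply Finset.le_inf
          intro b hb
          rcases Finset.mem_insert.1 hb with rfl | hb
          · exact Finset.subset_univ M
          · rcases Finset.mem_insert.1 hb with rfl | hb
            · exact subset_rfl
            · exact (hD.2 b hb).2.subset
      rw [hinf, Finset.card_insert_of_notMem hMD, pow_succ]
      ring
    rw [Finset.sum_congr rfl hterm, Finset.sum_neg_distrib, ← Finset.sum_mul]
    have hcongr : chainsP (fun T : Finset Y => T ⊂ Finset.univ ∧ M ⊂ T)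
        = chainsP (fun T : Finset Y => M ⊂ T ∧ T ⊂ Finset.univ) :=
      chainsP_congr (fun T => and_comm)
    rw [hcongr, sum_chainsP_sign M hM, pow_succ]
    ring
  rw [Finset.sum_congr rfl hstep]
  have hemp : ((insert Finset.univ (∅ : Finset (Finset Y))).inf id) = Finset.univ := by
    simp
  rw [hemp]
  have hfilter : filterP (fun T : Finset Y => T ⊂ Finset.univ)
      = (Finset.univ : Finset Y).powerset.erase Finset.univ := by
    ext T
    simp [mem_filterP, Finset.mem_erase, Finset.mem_powerset, Finset.subset_univ,
      Finset.ssubset_univ_iff]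
  rw [hfilter]
  have hsplit : ∑ M ∈ (Finset.univ : Finset Y).powerset,
      (-1 : R) ^ ((Finset.univ \ M).card) * q ^ (∑ y ∈ M, w y)
      = ∑ M ∈ (Finset.univ : Finset Y).powerset.erase Finset.univ,
        (-1 : R) ^ ((Finset.univ \ M).card) * q ^ (∑ y ∈ M, w y)
        + (-1 : R) ^ ((Finset.univ \ (Finset.univ : Finset Y)).card) *
          q ^ (∑ y ∈ (Finset.univ : Finset Y), w y) := by
    rw [Finset.sum_erase_add _ _ (Finset.mem_powerset_self _)]
  have hself : (Finset.univ \ (Finset.univ : Finset Y)).card = 0 := by simp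
  rw [hself, pow_zero, one_mul] at hsplit
  have hgoal : (-1 : R) ^ (∅ : Finset (Finset Y)).card * q ^ (∑ y, w y)
      + ∑ M ∈ (Finset.univ : Finset Y).powerset.erase Finset.univ,
        (-1 : R) ^ ((Finset.univ \ M).card) * q ^ (∑ y ∈ M, w y)
      = ∑ M ∈ (Finset.univ : Finset Y).powerset,
        (-1 : R) ^ ((Finset.univ \ M).card) * q ^ (∑ y ∈ M, w y) := by
    rw [hsplit]
    simp only [Finset.card_empty, pow_zero]
    ring
  rw [hgoal]
  -- expand the product
  have hexp : ∏ y, (q ^ w y - 1)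
      = ∑ M ∈ (Finset.univ : Finset Y).powerset,
        (∏ y ∈ M, q ^ w y) * ∏ y ∈ Finset.univ \ M, (-1 : R) := by
    rw [← Finset.prod_add]
    apply Finset.prod_congr rfl
    intro y _
    ring
  rw [hexp]
  apply Finset.sum_congr rfl
  intro M _
  rw [Finset.prod_const, Finset.prod_pow_eq_pow_sum]
  ring

end Comb

/-- Fixed-flag computation over a `Γ`-set: let `Γ` be a finite group acting on a finite
set `X`.  Flags `I_ℓ ⊊ ⋯ ⊊ I_1 ⊊ I_0 = X` are encoded by the chain
`C = {I_1, …, I_ℓ}` of proper subsets (so `ℓ(I_•) = |C|` and `I_max = ⋂ C`).  Then the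
sum over all `Γ`-fixed flags of `(-1)^{ℓ(I_•)} q^{|I_max|}` equals
`Q_λ(q) = ∏_{orbits ω} (q^{|ω|} - 1) = ∏_i (q^i - 1)^{λ_i}`, where `λ_i` is the number
of `Γ`-orbits of size `i`. -/
theorem stmt_13 (Γ : Type*) [Group Γ] [Finite Γ] (X : Type*) [Fintype X]
    [MulAction Γ X] :
    (∑ C ∈ Finset.univ.filter (fun C : Finset (Finset X) =>
        (∀ A ∈ C, A ⊂ Finset.univ) ∧
        IsChain (· ⊆ ·) (C : Set (Finset X)) ∧
        (∀ A ∈ C, ∀ γ : Γ, ∀ x ∈ A, γ • x ∈ A)),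
      (-1 : Polynomial ℤ) ^ C.card *
        Polynomial.X ^ (((insert Finset.univ C).inf id).card)) =
      ∏ᶠ ω : MulAction.orbitRel.Quotient Γ X,
        (Polynomial.X ^ (Nat.card ω.orbit) - 1) := by
  set Ω := MulAction.orbitRel.Quotient Γ X with hΩ
  letI : Fintype Ω := Fintype.ofFinite Ω
  set mkq : X → Ω := Quotient.mk'' with hmkq
  set sat : Finset Ω → Finset X := fun S => Finset.univ.filter fun x => mkq x ∈ S with hsat
  have hmem : ∀ (S : Finset Ω) (x : X), x ∈ sat S ↔ mkq x ∈ S := by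
    intro S x; simp [hsat]
  have hsurj : ∀ ω : Ω, ∃ x, mkq x = ω := fun ω => ⟨Quotient.out ω, Quotient.out_eq' ω⟩
  have himg : ∀ S : Finset Ω, (sat S).image mkq = S := by
    intro S; ext ω
    simp only [Finset.mem_image]
    constructor
    · rintro ⟨x, hx, rfl⟩; exact (hmem S x).1 hx
    · intro hω; obtain ⟨x, hx⟩ := hsurj ω; exact ⟨x, (hmem S x).2 (hx ▸ hω), hx⟩
  have hsat_inv : ∀ (S : Finset Ω) (γ : Γ) (x : X), x ∈ sat S → γ • x ∈ sat S := by
    intro S γ x hx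
    rw [hmem] at hx ⊢
    have hq : mkq (γ • x) = mkq x := Quotient.sound' ⟨γ, rfl⟩
    rw [hq]; exact hx
  have hA_eq : ∀ A : Finset X, (∀ γ : Γ, ∀ x ∈ A, γ • x ∈ A) → sat (A.image mkq) = A := by
    intro A hA
    ext x
    rw [hmem, Finset.mem_image]
    constructor
    · rintro ⟨a, ha, hax⟩
      have hrel : a ∈ MulAction.orbit Γ x := Quotient.exact' hax
      obtain ⟨γ, hγ⟩ := hrel
      have : x = γ⁻¹ • a := by rw [← hγ, inv_smul_smul]
      rw [this]
      exact hA γ⁻¹ a ha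
    · intro hx; exact ⟨x, hx, rfl⟩
  have hmono : ∀ S S' : Finset Ω, S ⊆ S' → sat S ⊆ sat S' := by
    intro S S' h x hx
    rw [hmem] at hx ⊢
    exact h hx
  have hsub_iff : ∀ S S' : Finset Ω, sat S ⊆ sat S' ↔ S ⊆ S' := by
    intro S S'
    constructor
    · intro h ω hω
      obtain ⟨x, rfl⟩ := hsurj ω
      exact (hmem _ _).1 (h ((hmem _ _).2 hω))
    · exact hmono S S'
  have hinj : ∀ S S' : Finset Ω, sat S = sat S' → S = S' := by
    intro S S' h
    rw [← himg S, ← himg S', h]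
  have hssub_iff : ∀ S S' : Finset Ω, sat S ⊂ sat S' ↔ S ⊂ S' := by
    intro S S'
    rw [Finset.ssubset_iff_subset_ne, Finset.ssubset_iff_subset_ne, hsub_iff]
    refine and_congr Iff.rfl ⟨fun h h' => h (by rw [h']), fun h h' => h (hinj _ _ h')⟩
  have hsat_univ : sat Finset.univ = Finset.univ := by
    ext x; simp [hsat]
  have hsat_inter : ∀ S S' : Finset Ω, sat (S ∩ S') = sat S ∩ sat S' := by
    intro S S'
    ext x
    simp only [Finset.mem_inter, hmem]
  have hsat_inf : ∀ C : Finset (Finset Ω), sat (C.inf id) = (C.image sat).inf id := by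
    intro C
    induction C using Finset.induction_on with
    | empty => simpa using hsat_univ
    | @insert a s ha ih =>
      rw [Finset.inf_insert, Finset.image_insert, Finset.inf_insert, id, id, ← ih]
      simpa [Finset.inf_eq_inter] using hsat_inter a (s.inf id)
  have worb : ∀ ω : Ω, Nat.card ω.orbit = (Finset.univ.filter fun x => mkq x = ω).card := by
    intro ω
    have e : ω.orbit = {x | mkq x = ω} :=
      Set.ext fun x => MulAction.orbitRel.Quotient.mem_orbit
    rw [e, Nat.card_eq_fintype_card]
    simp [Fintype.card_subtype]
  have hcard : ∀ S : Finset Ω, (sat S).card = ∑ ω ∈ S, Nat.card ω.orbit := by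
    intro S
    rw [Finset.card_eq_sum_card_fiberwise (f := mkq) (t := S) (fun x hx => (hmem S x).1 hx)]
    refine Finset.sum_congr rfl fun ω hω => ?_
    rw [worb ω]
    congr 1
    ext x
    simp only [Finset.mem_filter]
    constructor
    · rintro ⟨_, h⟩; exact ⟨Finset.mem_univ _, h⟩
    · rintro ⟨_, h⟩; exact ⟨(hmem S x).2 (h ▸ hω), h⟩
  rw [finprod_eq_prod_of_fintype, ← key_sum (Y := Ω) (fun ω => Nat.card ω.orbit)
    (Polynomial.X : Polynomial ℤ)]
  refine Finset.sum_nbij' (i := fun C => C.image (fun A => A.image mkq))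
    (j := fun S => S.image sat) ?_ ?_ ?_ ?_ ?_
  · intro C hC
    rw [Finset.mem_filter] at hC
    obtain ⟨-, hprop, hchain, hinv⟩ := hC
    rw [mem_chainsP]
    constructor
    · rw [Finset.coe_image]
      exact hchain.image_of_map_rel _ _ _ (fun A B h => Finset.image_subset_image h)
    · intro T hT
      rw [Finset.mem_image] at hT
      obtain ⟨A, hA, rfl⟩ := hT
      rw [← hssub_iff, hA_eq A (hinv A hA), hsat_univ]
      exact hprop A hA
  · intro S hS
    rw [mem_chainsP] at hS
    obtain ⟨hchain, hprop⟩ := hS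
    rw [Finset.mem_filter]
    refine ⟨Finset.mem_univ _, ?_, ?_, ?_⟩
    · intro A hA
      rw [Finset.mem_image] at hA
      obtain ⟨T, hT, rfl⟩ := hA
      rw [← hsat_univ]
      exact (hssub_iff _ _).2 (hprop T hT)
    · rw [Finset.coe_image]
      exact hchain.image_of_map_rel _ _ _ (fun T T' h => hmono _ _ h)
    · intro A hA γ x hx
      rw [Finset.mem_image] at hA
      obtain ⟨T, hT, rfl⟩ := hA
      exact hsat_inv T γ x hx
  · intro C hC
    rw [Finset.mem_filter] at hC
    obtain ⟨-, hprop, hchain, hinv⟩ := hC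
    rw [Finset.image_image]
    refine Eq.trans (Finset.image_congr fun A hA => hA_eq A (hinv A hA)) ?_
    exact Finset.image_id
  · intro S hS
    rw [Finset.image_image]
    refine Eq.trans (Finset.image_congr fun T hT => himg T) ?_
    exact Finset.image_id
  · intro C hC
    rw [Finset.mem_filter] at hC
    obtain ⟨-, hprop, hchain, hinv⟩ := hC
    have hCS : C = (C.image (fun A => A.image mkq)).image sat := by
      rw [Finset.image_image]
      refine (Eq.trans (Finset.image_congr fun A hA => hA_eq A (hinv A hA)) ?_).symm
      exact Finset.image_id
    have hcardC : (C.image (fun A => A.image mkq)).card = C.card := by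
      apply Finset.card_image_of_injOn
      intro A hA B hB hAB
      rw [← hA_eq A (hinv A hA), ← hA_eq B (hinv B hB)]
      exact congrArg sat hAB
    rw [hcardC]
    congr 1
    conv_lhs => rw [hCS]
    rw [show insert Finset.univ ((C.image (fun A => A.image mkq)).image sat)
        = ((insert Finset.univ (C.image (fun A => A.image mkq))).image sat) from by
      rw [Finset.image_insert, hsat_univ]]
    rw [← hsat_inf, hcard]
    convert rfl
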